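/- Fix an environment with two facilities at ℓ_1 < ℓ_2, building costs b_1, b_2 > 0, Δ = ℓ_2 − ℓ_1 and M = Δ/2 + b_2/4 − b_1/4, and assume 0 < M < Δ. Let B = max{ (min(b_1, b_2) + Δ)/(b_1 + b_2), (min(b_1, b_2) + Δ + M)/(max(b_1, b_2) + M) }. Then every strategyproof and anonymous two-agent mechanism f has social cost approximation ratio at least B: for every real r < B there exists a profile x ∈ ℝ² with SC(f(x)) > r · OPT(x). -/

import Mathlib

/-- Number of agents assigned to facility `j` under assignment `s`
(two agents, two facilities; facility 1 is index `0`, facility 2 is index `1`). -/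
def facCount (s : Fin 2 → Fin 2) (j : Fin 2) : ℕ :=
  (Finset.univ.filter fun i => s i = j).card

/-- Cost of an agent with true position `y` under assignment `s`, being agent `i`. -/
noncomputable def agentCost (ℓ bc : Fin 2 → ℝ) (y : ℝ)
    (s : Fin 2 → Fin 2) (i : Fin 2) : ℝ :=
  |y - ℓ (s i)| + bc (s i) / (facCount s (s i) : ℝ)

/-- A two-agent mechanism is strategyproof if no agent can decrease her (true)
cost by misreporting her position. -/
def Strategyproof (ℓ bc : Fin 2 → ℝ)
    (f : (Fin 2 → ℝ) → Fin 2 → Fin 2) : Prop :=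
  ∀ (x : Fin 2 → ℝ) (i : Fin 2) (xi' : ℝ),
    agentCost ℓ bc (x i) (f x) i ≤
      agentCost ℓ bc (x i) (f (Function.update x i xi')) i

/-- A two-agent mechanism is anonymous: `f(x₂, x₁) = (f₂(x₁,x₂), f₁(x₁,x₂))`. -/
def Anonymous (f : (Fin 2 → ℝ) → Fin 2 → Fin 2) : Prop :=
  ∀ x₁ x₂ : ℝ,
    f ![x₂, x₁] 0 = f ![x₁, x₂] 1 ∧ f ![x₂, x₁] 1 = f ![x₁, x₂] 0

/-- Social cost of an assignment `s` with respect to the true profile `x`. -/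
noncomputable def socialCost (ℓ bc : Fin 2 → ℝ) (x : Fin 2 → ℝ)
    (s : Fin 2 → Fin 2) : ℝ :=
  ∑ i : Fin 2, agentCost ℓ bc (x i) s i

/-- Optimal (minimum) social cost over all four assignments. -/
noncomputable def OPT (ℓ bc : Fin 2 → ℝ) (x : Fin 2 → ℝ) : ℝ :=
  ⨅ s : Fin 2 → Fin 2, socialCost ℓ bc x s

/- ### Auxiliary lemmas -/

lemma four_cases (s : Fin 2 → Fin 2) :
    s = ![0,0] ∨ s = ![0,1] ∨ s = ![1,0] ∨ s = ![1,1] := by revert s; decide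

lemma facCount_eval : ∀ (s : Fin 2 → Fin 2) (i : Fin 2),
    facCount s (s i) = if s 0 = s 1 then 2 else 1 := by decide

lemma habs_ge {u v : ℝ} (h : v ≤ u) : |u - v| = u - v := abs_of_nonneg (by linarith)

lemma habs_le {u v : ℝ} (h : u ≤ v) : |u - v| = v - u := by
  rw [abs_of_nonpos (by linarith)]; ring

section helpers
variable {ℓ bc : Fin 2 → ℝ} {f : (Fin 2 → ℝ) → Fin 2 → Fin 2}

lemma agentCost_eval (y : ℝ) (s : Fin 2 → Fin 2) (i : Fin 2) :
    agentCost ℓ bc y s i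
      = |y - ℓ (s i)| + bc (s i) / (if s 0 = s 1 then 2 else 1) := by
  unfold agentCost
  rw [facCount_eval]
  split <;> norm_num

lemma aC00 (y : ℝ) (i : Fin 2) :
    agentCost ℓ bc y ![0,0] i = |y - ℓ 0| + bc 0 / 2 := by
  fin_cases i <;> rw [agentCost_eval] <;> norm_num

lemma aC11 (y : ℝ) (i : Fin 2) :
    agentCost ℓ bc y ![1,1] i = |y - ℓ 1| + bc 1 / 2 := by
  fin_cases i <;> rw [agentCost_eval] <;> norm_num

lemma aC01₀ (y : ℝ) : agentCost ℓ bc y ![0,1] 0 = |y - ℓ 0| + bc 0 := by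
  rw [agentCost_eval]; norm_num

lemma aC01₁ (y : ℝ) : agentCost ℓ bc y ![0,1] 1 = |y - ℓ 1| + bc 1 := by
  rw [agentCost_eval]; norm_num

lemma aC10₀ (y : ℝ) : agentCost ℓ bc y ![1,0] 0 = |y - ℓ 1| + bc 1 := by
  rw [agentCost_eval]; norm_num

lemma aC10₁ (y : ℝ) : agentCost ℓ bc y ![1,0] 1 = |y - ℓ 0| + bc 0 := by
  rw [agentCost_eval]; norm_num

lemma socialCost_eval (x : Fin 2 → ℝ) (s : Fin 2 → Fin 2) :
    socialCost ℓ bc x s = agentCost ℓ bc (x 0) s 0 + agentCost ℓ bc (x 1) s 1 := by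
  simp [socialCost, Fin.sum_univ_two]

lemma update0 (a b c : ℝ) : Function.update ![a,b] 0 c = ![c,b] := by
  funext i; fin_cases i <;> simp [Function.update]

lemma update1 (a b c : ℝ) : Function.update ![a,b] 1 c = ![a,c] := by
  funext i; fin_cases i <;> simp [Function.update]

lemma sp₀ (hsp : Strategyproof ℓ bc f) (a b c : ℝ) :
    agentCost ℓ bc a (f ![a,b]) 0 ≤ agentCost ℓ bc a (f ![c,b]) 0 := by
  have h := hsp ![a,b] 0 c
  rwa [update0, Matrix.cons_val_zero] at h

lemma sp₁ (hsp : Strategyproof ℓ bc f) (a b c : ℝ) :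
    agentCost ℓ bc b (f ![a,b]) 1 ≤ agentCost ℓ bc b (f ![a,c]) 1 := by
  have h := hsp ![a,b] 1 c
  rwa [update1, Matrix.cons_val_one, Matrix.cons_val_zero] at h

lemma OPT_le' (x : Fin 2 → ℝ) (s : Fin 2 → Fin 2) : OPT ℓ bc x ≤ socialCost ℓ bc x s :=
  ciInf_le (Set.Finite.bddBelow (Set.finite_range _)) s

lemma OPT_pos' (hbp : ∀ j, 0 < bc j) (x : Fin 2 → ℝ) : 0 < OPT ℓ bc x := by
  have key : ∀ (s : Fin 2 → Fin 2), min (bc 0) (bc 1) ≤ socialCost ℓ bc x s := by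
    intro s
    have hmj : ∀ j : Fin 2, min (bc 0) (bc 1) ≤ bc j := by
      intro j; fin_cases j
      · exact min_le_left _ _
      · exact min_le_right _ _
    have h1 : ∀ (y : ℝ) (i : Fin 2), min (bc 0) (bc 1) / 2 ≤ agentCost ℓ bc y s i := by
      intro y i
      rw [agentCost_eval]
      have ha := abs_nonneg (y - ℓ (s i))
      have hm := hmj (s i)
      have hbsi := hbp (s i)
      split <;> linarith
    rw [socialCost_eval]
    linarith [h1 (x 0) 0, h1 (x 1) 1]
  have h2 : min (bc 0) (bc 1) ≤ OPT ℓ bc x := le_ciInf key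
  have h3 : 0 < min (bc 0) (bc 1) := lt_min (hbp 0) (hbp 1)
  linarith

lemma hstep {N D c K r : ℝ} (hD : 0 < D) (hc : 0 < c) (hr : r < N / D)
    (h : N * c ≤ K * D) : r * c < K := by
  have h1 : r * c < (N / D) * c := mul_lt_mul_of_pos_right hr hc
  have h2 : (N / D) * c ≤ K := by
    rw [div_mul_eq_mul_div, div_le_iff₀ hD]; linarith
  linarith

end helpers

/-- Lower bound on the approximation ratio of every strategyproof and
anonymous two-agent mechanism when `0 < M < Δ`. -/
theorem sp_anonymous_ratio_lower_bound (ℓ bc : Fin 2 → ℝ) (hℓ : ℓ 0 < ℓ 1)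
    (hb : ∀ j, 0 < bc j)
    (M : ℝ) (hM : M = (ℓ 1 - ℓ 0) / 2 + bc 1 / 4 - bc 0 / 4)
    (hM0 : 0 < M) (hMΔ : M < ℓ 1 - ℓ 0)
    (B : ℝ)
    (hB : B = max ((min (bc 0) (bc 1) + (ℓ 1 - ℓ 0)) / (bc 0 + bc 1))
              ((min (bc 0) (bc 1) + (ℓ 1 - ℓ 0) + M) / (max (bc 0) (bc 1) + M)))
    (f : (Fin 2 → ℝ) → Fin 2 → Fin 2)
    (hsp : Strategyproof ℓ bc f) (han : Anonymous f) :
    ∀ r : ℝ, r < B →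
      ∃ x : Fin 2 → ℝ, r * OPT ℓ bc x < socialCost ℓ bc x (f x) := by
  intro r hr
  have hb0 := hb 0
  have hb1 := hb 1
  have hmin0 : min (bc 0) (bc 1) ≤ bc 0 := min_le_left _ _
  have hmin1 : min (bc 0) (bc 1) ≤ bc 1 := min_le_right _ _
  have hmax0 : bc 0 ≤ max (bc 0) (bc 1) := le_max_left _ _
  have hmax1 : bc 1 ≤ max (bc 0) (bc 1) := le_max_right _ _
  rcases lt_or_ge r 1 with hr1 | hr1
  · -- trivial case r < 1
    refine ⟨![ℓ 0, ℓ 0], ?_⟩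
    have h1 := OPT_pos' (ℓ := ℓ) hb (![ℓ 0, ℓ 0] : Fin 2 → ℝ)
    have h2 := OPT_le' (ℓ := ℓ) (bc := bc) ![ℓ 0, ℓ 0] (f ![ℓ 0, ℓ 0])
    nlinarith
  -- now r ≥ 1
  have hsplit : r < (min (bc 0) (bc 1) + (ℓ 1 - ℓ 0)) / (bc 0 + bc 1)
      ∨ r < (min (bc 0) (bc 1) + (ℓ 1 - ℓ 0) + M) / (max (bc 0) (bc 1) + M) := by
    rw [hB] at hr; exact lt_max_iff.mp hr
  have hfin : ∀ (P : Fin 2 → ℝ) (c K : ℝ), OPT ℓ bc P ≤ c →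
      socialCost ℓ bc P (f P) = K → r * c < K →
      r * OPT ℓ bc P < socialCost ℓ bc P (f P) := by
    intro P c K h1 h2 h3
    have h4 : r * OPT ℓ bc P ≤ r * c :=
      mul_le_mul_of_nonneg_left h1 (by linarith)
    rw [h2]; linarith
  have hex2 : ∀ a b : ℝ, 0 < a → 0 < b → ∃ d : ℝ, 0 < d ∧ d < a ∧ d < b := by
    intro a b ha hbb
    have h0 : 0 < min a b := lt_min ha hbb
    refine ⟨min a b / 2, by positivity, ?_, ?_⟩
    · have := min_le_left a b; linarith
    · have := min_le_right a b; linarith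
  have hex : ∀ W G : ℝ, 0 < W → 0 < G →
      ∃ e : ℝ, 0 < e ∧ e < W ∧ (r + 1) * e < G := by
    intro W G hW hG
    have hr2 : 0 < r + 1 := by linarith
    refine ⟨min (W/2) (G/(2*(r+1))), lt_min (by linarith) (by positivity), ?_, ?_⟩
    · have := min_le_left (W/2) (G/(2*(r+1))); linarith
    · have h1 : min (W/2) (G/(2*(r+1))) ≤ G/(2*(r+1)) := min_le_right _ _
      have h2 : (r+1) * (G/(2*(r+1))) = G/2 := by field_simp
      nlinarith [mul_le_mul_of_nonneg_left h1 (le_of_lt hr2)]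
  have hdiag : ∀ q : ℝ, f ![q,q] = ![0,0] ∨ f ![q,q] = ![1,1] := by
    intro q
    have h := (han q q).1
    rcases four_cases (f ![q,q]) with hf|hf|hf|hf
    · exact Or.inl hf
    · rw [hf] at h; exact absurd h (by decide)
    · rw [hf] at h; exact absurd h (by decide)
    · exact Or.inr hf
  rcases hdiag (ℓ 0) with hd0 | hd0
  · rcases hdiag (ℓ 1) with hd1 | hd1
    · -- f(ℓ1,ℓ1) = (0,0) : bad profile (ℓ1, ℓ1)
      refine ⟨![ℓ 1, ℓ 1], hfin _ (bc 1) (2*(ℓ 1 - ℓ 0) + bc 0) ?_ ?_ ?_⟩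
      · have h := OPT_le' (ℓ := ℓ) (bc := bc) ![ℓ 1, ℓ 1] ![1,1]
        have he : socialCost ℓ bc ![ℓ 1, ℓ 1] ![1,1] = bc 1 := by
          rw [socialCost_eval]
          simp only [Matrix.cons_val_zero, Matrix.cons_val_one, Matrix.head_cons]
          rw [aC11, aC11, sub_self, abs_zero]; ring
        rw [he] at h; exact h
      · rw [hd1, socialCost_eval]
        simp only [Matrix.cons_val_zero, Matrix.cons_val_one, Matrix.head_cons]
        rw [aC00, aC00, habs_ge (le_of_lt hℓ)]; ring
      · rcases hsplit with hrB|hrB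
        · exact hstep (by linarith) hb1 hrB
            (mul_le_mul (by linarith) (by linarith) (by linarith) (by linarith))
        · exact hstep (by linarith) hb1 hrB
            (mul_le_mul (by linarith) (by linarith) (by linarith) (by linarith))
    · -- main case: f(ℓ0,ℓ0) = (0,0), f(ℓ1,ℓ1) = (1,1)
      by_cases hA : ∃ y₀ : ℝ, f ![ℓ 0, y₀] = ![1,1]
      · obtain ⟨y₀, hy₀⟩ := hA
        have lemA : ∀ y : ℝ, ℓ 0 + M < y → y ≤ ℓ 1 → f ![ℓ 0, y] = ![1,1] := by
          intro y hyl hyr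
          have hy0 : ℓ 0 ≤ y := by linarith
          have h := sp₁ hsp (ℓ 0) y y₀
          rw [hy₀, aC11] at h
          rcases four_cases (f ![ℓ 0, y]) with hf|hf|hf|hf
          · exfalso; rw [hf, aC00] at h
            rw [habs_ge hy0, habs_le hyr] at h; linarith
          · exfalso; rw [hf, aC01₁] at h; linarith
          · exfalso; rw [hf, aC10₁] at h
            rw [habs_ge hy0, habs_le hyr] at h; linarith
          · exact hf
        rcases hsplit with hrB|hrB
        · -- ratio B1 at profile (ℓ0, ℓ1)
          have hfP : f ![ℓ 0, ℓ 1] = ![1,1] := lemA (ℓ 1) (by linarith) le_rfl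
          refine ⟨![ℓ 0, ℓ 1], hfin _ (bc 0 + bc 1) ((ℓ 1 - ℓ 0) + bc 1) ?_ ?_ ?_⟩
          · have h := OPT_le' (ℓ := ℓ) (bc := bc) ![ℓ 0, ℓ 1] ![0,1]
            have he : socialCost ℓ bc ![ℓ 0, ℓ 1] ![0,1] = bc 0 + bc 1 := by
              rw [socialCost_eval]
              simp only [Matrix.cons_val_zero, Matrix.cons_val_one, Matrix.head_cons]
              rw [aC01₀, aC01₁, sub_self, abs_zero, sub_self, abs_zero]; ring
            rw [he] at h; exact h
          · rw [hfP, socialCost_eval]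
            simp only [Matrix.cons_val_zero, Matrix.cons_val_one, Matrix.head_cons]
            rw [aC11, aC11, habs_le (le_of_lt hℓ), sub_self, abs_zero]; ring
          · exact hstep (by linarith) (by linarith) hrB
              (mul_le_mul (by linarith) le_rfl (by linarith) (by linarith))
        · -- ratio B2 at profile (ℓ0, ℓ0 + M + e)
          have hG : 0 < 2*(ℓ 1 - ℓ 0) - M + bc 1 - r * (M + bc 0) := by
            have h5 : (min (bc 0) (bc 1) + (ℓ 1 - ℓ 0) + M) * (M + bc 0)
                ≤ (2*(ℓ 1 - ℓ 0) - M + bc 1) * (max (bc 0) (bc 1) + M) :=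
              mul_le_mul (by linarith) (by linarith) (by linarith) (by linarith)
            have := hstep (by linarith : (0:ℝ) < max (bc 0) (bc 1) + M)
              (by linarith : (0:ℝ) < M + bc 0) hrB h5
            linarith
          obtain ⟨e, he0, heW, heG⟩ := hex (ℓ 1 - ℓ 0 - M) _ (by linarith) hG
          have hfP : f ![ℓ 0, ℓ 0 + M + e] = ![1,1] := lemA _ (by linarith) (by linarith)
          refine ⟨![ℓ 0, ℓ 0 + M + e],
            hfin _ (M + e + bc 0) (2*(ℓ 1 - ℓ 0) - M - e + bc 1) ?_ ?_ ?_⟩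
          · have h := OPT_le' (ℓ := ℓ) (bc := bc) ![ℓ 0, ℓ 0 + M + e] ![0,0]
            have he' : socialCost ℓ bc ![ℓ 0, ℓ 0 + M + e] ![0,0] = M + e + bc 0 := by
              rw [socialCost_eval]
              simp only [Matrix.cons_val_zero, Matrix.cons_val_one, Matrix.head_cons]
              rw [aC00, aC00, sub_self, abs_zero, habs_ge (by linarith : ℓ 0 ≤ ℓ 0 + M + e)]
              ring
            rw [he'] at h; exact h
          · rw [hfP, socialCost_eval]
            simp only [Matrix.cons_val_zero, Matrix.cons_val_one, Matrix.head_cons]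
            rw [aC11, aC11, habs_le (le_of_lt hℓ),
              habs_le (by linarith : ℓ 0 + M + e ≤ ℓ 1)]
            ring
          · have hh1 : r * (M + e + bc 0) = r * (M + bc 0) + r * e := by ring
            have hh2 : (r + 1) * e = r * e + e := by ring
            linarith
      · by_cases hBe : ∃ x₀ : ℝ, f ![x₀, ℓ 1] = ![0,0]
        · obtain ⟨x₀', hx₀'⟩ := hBe
          have lemB : ∀ x : ℝ, ℓ 0 ≤ x → x < ℓ 0 + M → f ![x, ℓ 1] = ![0,0] := by
            intro x hxl hxr
            have hx1 : x ≤ ℓ 1 := by linarith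
            have h := sp₀ hsp x (ℓ 1) x₀'
            rw [hx₀', aC00] at h
            rcases four_cases (f ![x, ℓ 1]) with hf|hf|hf|hf
            · exact hf
            · exfalso; rw [hf, aC01₀] at h; linarith
            · exfalso; rw [hf, aC10₀] at h
              rw [habs_le hx1, habs_ge hxl] at h; linarith
            · exfalso; rw [hf, aC11] at h
              rw [habs_le hx1, habs_ge hxl] at h; linarith
          rcases hsplit with hrB|hrB
          · -- ratio B1 at profile (ℓ0, ℓ1)
            have hfP : f ![ℓ 0, ℓ 1] = ![0,0] := lemB (ℓ 0) le_rfl (by linarith)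
            refine ⟨![ℓ 0, ℓ 1], hfin _ (bc 0 + bc 1) ((ℓ 1 - ℓ 0) + bc 0) ?_ ?_ ?_⟩
            · have h := OPT_le' (ℓ := ℓ) (bc := bc) ![ℓ 0, ℓ 1] ![0,1]
              have he : socialCost ℓ bc ![ℓ 0, ℓ 1] ![0,1] = bc 0 + bc 1 := by
                rw [socialCost_eval]
                simp only [Matrix.cons_val_zero, Matrix.cons_val_one, Matrix.head_cons]
                rw [aC01₀, aC01₁, sub_self, abs_zero, sub_self, abs_zero]; ring
              rw [he] at h; exact h
            · rw [hfP, socialCost_eval]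
              simp only [Matrix.cons_val_zero, Matrix.cons_val_one, Matrix.head_cons]
              rw [aC00, aC00, sub_self, abs_zero, habs_ge (le_of_lt hℓ)]; ring
            · exact hstep (by linarith) (by linarith) hrB
                (mul_le_mul (by linarith) le_rfl (by linarith) (by linarith))
          · -- ratio B2 at profile (ℓ0 + M − e, ℓ1)
            have hG : 0 < (ℓ 1 - ℓ 0) + M + bc 0 - r * ((ℓ 1 - ℓ 0) - M + bc 1) := by
              have h6 : (min (bc 0) (bc 1) + (ℓ 1 - ℓ 0) + M) * ((ℓ 1 - ℓ 0) - M + bc 1)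
                  ≤ ((ℓ 1 - ℓ 0) + M + bc 0) * (max (bc 0) (bc 1) + M) :=
                mul_le_mul (by linarith) (by linarith) (by linarith) (by linarith)
              have := hstep (by linarith : (0:ℝ) < max (bc 0) (bc 1) + M)
                (by linarith : (0:ℝ) < (ℓ 1 - ℓ 0) - M + bc 1) hrB h6
              linarith
            obtain ⟨e, he0, heW, heG⟩ := hex M _ hM0 hG
            have hfP : f ![ℓ 0 + M - e, ℓ 1] = ![0,0] := lemB _ (by linarith) (by linarith)
            refine ⟨![ℓ 0 + M - e, ℓ 1],
              hfin _ ((ℓ 1 - ℓ 0) - M + e + bc 1) ((ℓ 1 - ℓ 0) + M - e + bc 0) ?_ ?_ ?_⟩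
            · have h := OPT_le' (ℓ := ℓ) (bc := bc) ![ℓ 0 + M - e, ℓ 1] ![1,1]
              have he' : socialCost ℓ bc ![ℓ 0 + M - e, ℓ 1] ![1,1]
                  = (ℓ 1 - ℓ 0) - M + e + bc 1 := by
                rw [socialCost_eval]
                simp only [Matrix.cons_val_zero, Matrix.cons_val_one, Matrix.head_cons]
                rw [aC11, aC11, sub_self, abs_zero,
                  habs_le (by linarith : ℓ 0 + M - e ≤ ℓ 1)]
                ring
              rw [he'] at h; exact h
            · rw [hfP, socialCost_eval]
              simp only [Matrix.cons_val_zero, Matrix.cons_val_one, Matrix.head_cons]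
              rw [aC00, aC00, habs_ge (by linarith : ℓ 0 ≤ ℓ 0 + M - e),
                habs_ge (le_of_lt hℓ)]
              ring
            · have hh1 : r * ((ℓ 1 - ℓ 0) - M + e + bc 1)
                  = r * ((ℓ 1 - ℓ 0) - M + bc 1) + r * e := by ring
              have hh2 : (r + 1) * e = r * e + e := by ring
              linarith
        · -- residual case: impossible
          exfalso
          push_neg at hA hBe
          have hR1 : f ![ℓ 0, ℓ 1] = ![0,1] := by
            have h := sp₀ hsp (ℓ 0) (ℓ 1) (ℓ 1)
            rw [hd1, aC11] at h
            rcases four_cases (f ![ℓ 0, ℓ 1]) with hf|hf|hf|hf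
            · exact absurd hf (hBe (ℓ 0))
            · exact hf
            · exfalso; rw [hf, aC10₀] at h; linarith
            · exact absurd hf (hA (ℓ 1))
          obtain ⟨d0, hd0p, hd0b, hd0M⟩ := hex2 (bc 0 / 4) M (by linarith) hM0
          obtain ⟨d1, hd1p, hd1b, hd1M⟩ := hex2 (bc 1 / 4) (ℓ 1 - ℓ 0 - M) (by linarith) (by linarith)
          have hx₀l : ℓ 0 ≤ ℓ 0 + M - d0 := by linarith
          have hx₀r : ℓ 0 + M - d0 ≤ ℓ 1 := by linarith
          have hy₁l : ℓ 0 ≤ ℓ 0 + M + d1 := by linarith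
          have hy₁r : ℓ 0 + M + d1 ≤ ℓ 1 := by linarith
          have hR2 : f ![ℓ 0 + M - d0, ℓ 1] = ![1,1] := by
            have h1 := sp₀ hsp (ℓ 0 + M - d0) (ℓ 1) (ℓ 1)
            rw [hd1, aC11] at h1
            rcases four_cases (f ![ℓ 0 + M - d0, ℓ 1]) with hf|hf|hf|hf
            · exact absurd hf (hBe _)
            · exfalso; rw [hf, aC01₀] at h1
              rw [habs_ge hx₀l, habs_le hx₀r] at h1; linarith
            · exfalso; rw [hf, aC10₀] at h1; linarith
            · exact hf
          have hR3 : f ![ℓ 0, ℓ 0 + M + d1] = ![0,0] := by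
            have h := sp₁ hsp (ℓ 0) (ℓ 0 + M + d1) (ℓ 0)
            rw [hd0, aC00] at h
            rcases four_cases (f ![ℓ 0, ℓ 0 + M + d1]) with hf|hf|hf|hf
            · exact hf
            · exfalso; rw [hf, aC01₁] at h
              rw [habs_le hy₁r, habs_ge hy₁l] at h; linarith
            · exfalso; rw [hf, aC10₁] at h; linarith
            · exact absurd hf (hA _)
          -- profile (x₀, y₁) : contradiction
          have ha := sp₀ hsp (ℓ 0 + M - d0) (ℓ 0 + M + d1) (ℓ 0)
          rw [hR3, aC00] at ha
          have hbx := sp₁ hsp (ℓ 0 + M - d0) (ℓ 0 + M + d1) (ℓ 1)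
          rw [hR2, aC11] at hbx
          rcases four_cases (f ![ℓ 0 + M - d0, ℓ 0 + M + d1]) with hf|hf|hf|hf
          · rw [hf, aC00] at hbx
            rw [habs_ge hy₁l, habs_le hy₁r] at hbx; linarith
          · rw [hf, aC01₀] at ha; linarith
          · rw [hf, aC10₀] at ha
            rw [habs_le hx₀r, habs_ge hx₀l] at ha; linarith
          · rw [hf, aC11] at ha
            rw [habs_le hx₀r, habs_ge hx₀l] at ha; linarith
  · -- f(ℓ0,ℓ0) = (1,1) : bad profile (ℓ0, ℓ0)
    refine ⟨![ℓ 0, ℓ 0], hfin _ (bc 0) (2*(ℓ 1 - ℓ 0) + bc 1) ?_ ?_ ?_⟩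
    · have h := OPT_le' (ℓ := ℓ) (bc := bc) ![ℓ 0, ℓ 0] ![0,0]
      have he : socialCost ℓ bc ![ℓ 0, ℓ 0] ![0,0] = bc 0 := by
        rw [socialCost_eval]
        simp only [Matrix.cons_val_zero, Matrix.cons_val_one, Matrix.head_cons]
        rw [aC00, aC00, sub_self, abs_zero]; ring
      rw [he] at h; exact h
    · rw [hd0, socialCost_eval]
      simp only [Matrix.cons_val_zero, Matrix.cons_val_one, Matrix.head_cons]
      rw [aC11, aC11, habs_le (le_of_lt hℓ)]; ring
    · rcases hsplit with hrB|hrB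
      · exact hstep (by linarith) hb0 hrB
          (mul_le_mul (by linarith) (by linarith) (by linarith) (by linarith))
      · exact hstep (by linarith) hb0 hrB
          (mul_le_mul (by linarith) (by linarith) (by linarith) (by linarith))
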